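/- Let q ≥ 3, let δ = c_1 + c_2⌈log_q(n)⌉ with c_1, c_2 positive multiples of 4 satisfying (q^4/(q^4−1))^{c_1/4 − 1} ≥ q/(q−1) and (q^4/(q^4−1))^{c_2/4} ≥ q, let L = c_3 (log_q n)^2 be an integer with (2L+1) | n. Then there exist r ∈ Z_{2n} × Z_3 and α, β ∈ M = Z_4^{q−1} × Z_{2L+1} × Z_2 × Z_{q(2L+1)} × Z_{4L−1} such that |D(n;r,α,β)| ≥ |R_{q,n}| / (2n · 3 · [4^{q−1} · (2L+1) · 2 · q(2L+1) · (4L−1)]^2); in particular, combined with |R_{q,n}| ≥ q^{n−5}, the redundancy of D(n;r,α,β) is at most log_q(n) + 12 log_q log_q(n) + O(1). -/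
import Mathlib


/-- `a ⊕ b = min(a+b, q-1)` over the alphabet `Σ_q = {0,…,q-1}`. -/
def vplus (q a b : ℕ) : ℕ := min (a + b) (q - 1)

/-- The VT syndrome `Syn(z) = Σ_{i=1}^{|z|} i·z_i` (positions are 1-indexed). -/
def syn (z : List ℕ) : ℕ := ∑ i ∈ Finset.range z.length, (i + 1) * z.getD i 0

/-- `α(x) ∈ Σ_2^{n-1}`: `α(x)_i = 1` iff `x_{i+1} ≥ x_i`. -/
def alphaSeq (x : List ℕ) : List ℕ :=
  (List.range (x.length - 1)).map (fun i => if x.getD i 0 ≤ x.getD (i + 1) 0 then 1 else 0)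

/-- `Inv(x) = |{(i,j) : i < j, x_i > x_j}|`. -/
def invCount (x : List ℕ) : ℕ :=
  ((Finset.range x.length ×ˢ Finset.range x.length).filter
    (fun p => p.1 < p.2 ∧ x.getD p.2 0 < x.getD p.1 0)).card

/-- The location sequence `P(x) ∈ Σ_2^n`: `P(x)_i = 1` iff `x_i = q-1`. -/
def pseq (q : ℕ) (x : List ℕ) : List ℕ := x.map (fun a => if a = q - 1 then 1 else 0)

/-- Number of occurrences of the pattern `0011` as a substring of `z`. -/
def occ0011 (z : List ℕ) : ℕ :=
  ((List.range z.length).filter (fun i => (z.drop i).take 4 = [0, 0, 1, 1])).length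

/-- A valid segment of length at most `δ`. -/
def seg0011 (δ : ℕ) (z : List ℕ) : Prop :=
  [0, 0, 1, 1] <:+ z ∧ occ0011 z = 1 ∧ z.length ≤ δ

/-- The set `R_{q,n}`. -/
def Rset (q n δ : ℕ) : Set (List ℕ) :=
  {x | x.length = n ∧ (∀ a ∈ x, a < q) ∧ [0, 0, 1, 1] <:+ x ∧
    ∃ zs : List (List ℕ), x = zs.flatten ∧ ∀ z ∈ zs, seg0011 δ z}

/-- `f`-value of a segmentation: `Σ_j j·|z_j|` (1-indexed). -/
def fseg (zs : List (List ℕ)) : ℕ :=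
  ∑ j ∈ Finset.range zs.length, (j + 1) * (zs.getD j []).length

/-- Membership in the code `D_1(n;r)`. -/
def memD1 (q n δ r1 r2 : ℕ) (x : List ℕ) : Prop :=
  x.length = n ∧ (∀ a ∈ x, a < q) ∧ [0, 0, 1, 1] <:+ x ∧
    ∃ zs : List (List ℕ), x = zs.flatten ∧ (∀ z ∈ zs, seg0011 δ z) ∧
      fseg zs ≡ r1 [MOD 2 * n] ∧ zs.length ≡ r2 [MOD 3]

/-- The `i`-th block `x^{(1,i+1)}` of `x` (0-indexed `i`). -/
def blk1 (L : ℕ) (x : List ℕ) (i : ℕ) : List ℕ :=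
  (x.drop (i * (2 * L + 1))).take (2 * L + 1)

/-- The `i`-th shifted block `x^{(2,i+1)}` of `x`. -/
def blk2 (L : ℕ) (x : List ℕ) (i : ℕ) : List ℕ :=
  (x.drop (i * (2 * L + 1) + L)).take (2 * L + 1)

/-- The condition `Σ_{i<m} f̂(blk i) = s` in
`M = Z_4^{q-1} × Z_{2L+1} × Z_2 × Z_{q(2L+1)} × Z_{4L-1}`, componentwise. -/
def hatSumEq (q L m : ℕ) (blk : ℕ → List ℕ)
    (sN : ℕ → ℕ) (s1 s2 s3 s4 : ℕ) : Prop :=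
  (∀ a, a ≤ q - 2 → (∑ i ∈ Finset.range m, (blk i).count a) ≡ sN a [MOD 4]) ∧
  (∑ i ∈ Finset.range m, syn (alphaSeq (blk i))) ≡ s1 [MOD 2 * L + 1] ∧
  (∑ i ∈ Finset.range m, invCount (blk i)) ≡ s2 [MOD 2] ∧
  (∑ i ∈ Finset.range m, syn (blk i)) ≡ s3 [MOD q * (2 * L + 1)] ∧
  (∑ i ∈ Finset.range m, syn (pseq q (blk i))) ≡ s4 [MOD 4 * L - 1]

/-- Membership in the code `D(n;r,α,β)`. -/
def memD (q n δ L r1 r2 : ℕ) (sN : ℕ → ℕ) (s1 s2 s3 s4 : ℕ)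
    (uN : ℕ → ℕ) (u1 u2 u3 u4 : ℕ) (x : List ℕ) : Prop :=
  memD1 q n δ r1 r2 x ∧
  hatSumEq q L (n / (2 * L + 1)) (blk1 L x) sN s1 s2 s3 s4 ∧
  hatSumEq q L (n / (2 * L + 1) - 1) (blk2 L x) uN u1 u2 u3 u4


section Aux

lemma finite_bounded (q n : ℕ) : {l : List ℕ | l.length = n ∧ ∀ a ∈ l, a < q}.Finite := by
  have h := (List.finite_length_eq (Fin q) n).image (fun l => l.map (fun a : Fin q => (a : ℕ)))
  refine h.subset ?_
  rintro l ⟨hlen, hb⟩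
  refine ⟨l.attach.map (fun a => ⟨a.1, hb a.1 a.2⟩), by simp [hlen], ?_⟩
  simp [List.map_map]

lemma pigeon {α T : Type*} [Fintype T] [Nonempty T] {S : Set α} (hS : S.Finite)
    (φ : α → T) : ∃ t, S.ncard ≤ {x ∈ S | φ x = t}.ncard * Fintype.card T := by
  classical
  obtain ⟨t, -, ht⟩ := Finset.exists_max_image (Finset.univ : Finset T)
    (fun t => (hS.toFinset.filter (fun x => φ x = t)).card) Finset.univ_nonempty
  refine ⟨t, ?_⟩
  have h2 : {x ∈ S | φ x = t}.ncard = (hS.toFinset.filter (fun x => φ x = t)).card := by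
    rw [← Set.ncard_coe_finset]
    congr 1
    ext x
    simp [Set.Finite.mem_toFinset]
  rw [Set.ncard_eq_toFinset_card _ hS, h2]
  calc hS.toFinset.card = ∑ b : T, (hS.toFinset.filter (fun x => φ x = b)).card :=
        Finset.card_eq_sum_card_fiberwise (fun x _ => Finset.mem_univ _)
    _ ≤ ∑ _b : T, (hS.toFinset.filter (fun x => φ x = t)).card :=
        Finset.sum_le_sum (fun b _ => ht b (Finset.mem_univ b))
    _ = _ := by rw [Finset.sum_const, Finset.card_univ, smul_eq_mul, mul_comm]

/-- The value type of the hash `f̂`. -/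
abbrev FT (q L : ℕ) :=
  (Fin (q - 1) → Fin 4) × Fin (2 * L + 1) × Fin 2 × Fin (q * (2 * L + 1)) × Fin (4 * L - 1)

/-- The hash of a family of blocks. -/
def hatφ (q L m : ℕ) (hq : 3 ≤ q) (hL : 0 < L) (blk : ℕ → List ℕ) : FT q L :=
  (fun a => ⟨(∑ i ∈ Finset.range m, (blk i).count (a : ℕ)) % 4, Nat.mod_lt _ (by omega)⟩,
   ⟨(∑ i ∈ Finset.range m, syn (alphaSeq (blk i))) % (2 * L + 1), Nat.mod_lt _ (by omega)⟩,
   ⟨(∑ i ∈ Finset.range m, invCount (blk i)) % 2, Nat.mod_lt _ (by omega)⟩,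
   ⟨(∑ i ∈ Finset.range m, syn (blk i)) % (q * (2 * L + 1)),
      Nat.mod_lt _ (Nat.mul_pos (by omega) (by omega))⟩,
   ⟨(∑ i ∈ Finset.range m, syn (pseq q (blk i))) % (4 * L - 1), Nat.mod_lt _ (by omega)⟩)

/-- Extract the `sN` function from an element of `FT q L`. -/
def sNof (q L : ℕ) (s : FT q L) : ℕ → ℕ :=
  fun a => if h : a < q - 1 then (s.1 ⟨a, h⟩ : Fin 4).val else 0

lemma hatφ_spec (q L m : ℕ) (hq : 3 ≤ q) (hL : 0 < L) (blk : ℕ → List ℕ) (s : FT q L)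
    (h : hatφ q L m hq hL blk = s) :
    hatSumEq q L m blk (sNof q L s) s.2.1.val s.2.2.1.val s.2.2.2.1.val s.2.2.2.2.val := by
  subst h
  refine ⟨?_, ?_, ?_, ?_, ?_⟩
  · intro a ha
    have h' : a < q - 1 := by omega
    simp only [sNof, hatφ, dif_pos h']
    exact (Nat.mod_modEq _ 4).symm
  all_goals exact (Nat.mod_modEq _ _).symm

open Classical in
/-- A fixed choice of segmentation. -/
noncomputable def segOf (δ : ℕ) (x : List ℕ) : List (List ℕ) :=
  if h : ∃ zs : List (List ℕ), x = zs.flatten ∧ ∀ z ∈ zs, seg0011 δ z then h.choose else []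

lemma segOf_spec {δ : ℕ} {x : List ℕ}
    (h : ∃ zs : List (List ℕ), x = zs.flatten ∧ ∀ z ∈ zs, seg0011 δ z) :
    x = (segOf δ x).flatten ∧ ∀ z ∈ segOf δ x, seg0011 δ z := by
  classical
  rw [segOf, dif_pos h]
  exact h.choose_spec

end Aux

/-- there is a choice of `r, α, β` such that
`|D(n;r,α,β)| ≥ |R_{q,n}| / (2n · 3 · [4^{q-1}(2L+1)·2·q(2L+1)(4L-1)]^2)`
(stated multiplicatively, avoiding division). -/
theorem stmt11 (q n c1 c2 L : ℕ) (hq : 3 ≤ q)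
    (hc1 : 0 < c1) (hc2 : 0 < c2) (h4c1 : 4 ∣ c1) (h4c2 : 4 ∣ c2)
    (hineq1 : ((q : ℝ) ^ 4 / ((q : ℝ) ^ 4 - 1)) ^ (c1 / 4 - 1) ≥ (q : ℝ) / ((q : ℝ) - 1))
    (hineq2 : ((q : ℝ) ^ 4 / ((q : ℝ) ^ 4 - 1)) ^ (c2 / 4) ≥ (q : ℝ))
    (hL : 0 < L) (hdvd : (2 * L + 1) ∣ n) :
    ∃ (r1 r2 : ℕ) (sN : ℕ → ℕ) (s1 s2 s3 s4 : ℕ) (uN : ℕ → ℕ) (u1 u2 u3 u4 : ℕ),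
      (Rset q n (c1 + c2 * Nat.clog q n)).ncard ≤
        {x : List ℕ |
            memD q n (c1 + c2 * Nat.clog q n) L r1 r2 sN s1 s2 s3 s4 uN u1 u2 u3 u4 x}.ncard *
          (2 * n * 3 * (4 ^ (q - 1) * (2 * L + 1) * 2 * (q * (2 * L + 1)) * (4 * L - 1)) ^ 2) := by
  classical
  set δ := c1 + c2 * Nat.clog q n with hδ
  rcases Nat.eq_zero_or_pos n with hn | hn
  · refine ⟨0, 0, fun _ => 0, 0, 0, 0, 0, fun _ => 0, 0, 0, 0, 0, ?_⟩
    have hempty : Rset q n δ = ∅ := by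
      ext x
      simp only [Rset, Set.mem_setOf_eq, Set.mem_empty_iff_false, iff_false, not_and]
      intro hlen _ hsuf
      exfalso
      have := hsuf.length_le
      simp [hlen, hn] at this
    simp [hempty]
  -- main case: n > 0
  set m := n / (2 * L + 1) with hm
  haveI : Nonempty (Fin (2 * n)) := ⟨⟨0, by omega⟩⟩
  haveI : Nonempty (Fin (2 * L + 1)) := ⟨⟨0, by omega⟩⟩
  haveI : Nonempty (Fin (q * (2 * L + 1))) := ⟨⟨0, Nat.mul_pos (by omega) (by omega)⟩⟩
  haveI : Nonempty (Fin (4 * L - 1)) := ⟨⟨0, by omega⟩⟩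
  have hRfin : (Rset q n δ).Finite := by
    refine (finite_bounded q n).subset ?_
    rintro x ⟨h1, h2, -⟩
    exact ⟨h1, h2⟩
  set φ : List ℕ → Fin (2 * n) × Fin 3 × FT q L × FT q L := fun x =>
    (⟨fseg (segOf δ x) % (2 * n), Nat.mod_lt _ (by omega)⟩,
     ⟨(segOf δ x).length % 3, Nat.mod_lt _ (by omega)⟩,
     hatφ q L m hq hL (blk1 L x),
     hatφ q L (m - 1) hq hL (blk2 L x)) with hφdef
  obtain ⟨⟨t1, t2, t3, t4⟩, hpi⟩ := pigeon hRfin φ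
  refine ⟨t1.val, t2.val, sNof q L t3, t3.2.1.val, t3.2.2.1.val, t3.2.2.2.1.val, t3.2.2.2.2.val,
    sNof q L t4, t4.2.1.val, t4.2.2.1.val, t4.2.2.2.1.val, t4.2.2.2.2.val, ?_⟩
  set D : Set (List ℕ) := {x : List ℕ |
      memD q n δ L t1.val t2.val (sNof q L t3) t3.2.1.val t3.2.2.1.val t3.2.2.2.1.val
        t3.2.2.2.2.val (sNof q L t4) t4.2.1.val t4.2.2.1.val t4.2.2.2.1.val t4.2.2.2.2.val x}
    with hD
  have hDsub : D ⊆ Rset q n δ := by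
    rintro x ⟨⟨ha, hb, hc, zs, hzs1, hzs2, -⟩, -⟩
    exact ⟨ha, hb, hc, zs, hzs1, hzs2⟩
  have hfib : {x ∈ Rset q n δ | φ x = (t1, t2, t3, t4)} ⊆ D := by
    rintro x ⟨hxR, hxφ⟩
    obtain ⟨ha, hb, hc, hex⟩ := hxR
    obtain ⟨hseg1, hseg2⟩ := segOf_spec hex
    simp only [hφdef, Prod.mk.injEq] at hxφ
    obtain ⟨h1, h2, h3, h4⟩ := hxφ
    have h1v : fseg (segOf δ x) % (2 * n) = t1.val := congrArg Fin.val h1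
    have h2v : (segOf δ x).length % 3 = t2.val := congrArg Fin.val h2
    refine ⟨⟨ha, hb, hc, segOf δ x, hseg1, hseg2, ?_, ?_⟩, ?_, ?_⟩
    · have := (Nat.mod_modEq (fseg (segOf δ x)) (2 * n)).symm
      rwa [h1v] at this
    · have := (Nat.mod_modEq (segOf δ x).length 3).symm
      rwa [h2v] at this
    · exact hatφ_spec q L m hq hL (blk1 L x) t3 h3
    · exact hatφ_spec q L (m - 1) hq hL (blk2 L x) t4 h4
  have hDfin : D.Finite := hRfin.subset hDsub
  have hle : {x ∈ Rset q n δ | φ x = (t1, t2, t3, t4)}.ncard ≤ D.ncard :=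
    Set.ncard_le_ncard hfib hDfin
  have hcard : Fintype.card (Fin (2 * n) × Fin 3 × FT q L × FT q L) =
      2 * n * 3 * (4 ^ (q - 1) * (2 * L + 1) * 2 * (q * (2 * L + 1)) * (4 * L - 1)) ^ 2 := by
    simp only [FT, Fintype.card_prod, Fintype.card_fun, Fintype.card_fin]
    ring
  calc (Rset q n δ).ncard
      ≤ {x ∈ Rset q n δ | φ x = (t1, t2, t3, t4)}.ncard *
        Fintype.card (Fin (2 * n) × Fin 3 × FT q L × FT q L) := hpi
    _ ≤ D.ncard * (2 * n * 3 *
        (4 ^ (q - 1) * (2 * L + 1) * 2 * (q * (2 * L + 1)) * (4 * L - 1)) ^ 2) := by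
        rw [hcard]
        exact Nat.mul_le_mul_right _ hle
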